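/- Entropy bound from list concentration for product distributions: fix n ∈ ℕ, ℓ ∈ {1, …, n}, and ε ∈ [0, 1/4]. Let p_1, …, p_n ∈ [0,1] and let π be the product probability measure on {0,1}^n given by π(x) = ∏_{i=1}^n p_i^{x_i} (1−p_i)^{1−x_i}. If L ⊆ {0,1}^n is a set of cardinality exactly 2^{n−ℓ} with π(L) ≥ 2^{−εℓ}, then Σ_{i=1}^n h(p_i) ≤ n − (1−ε)²·ℓ/320; that is, the entropy of the product distribution is at most n − (1−ε)²ℓ/320. -/

import Mathlib

/-- Binary entropy function. -/
noncomputable def binEnt (p : ℝ) : ℝ :=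
  -(p * Real.logb 2 p) - (1 - p) * Real.logb 2 (1 - p)

private lemma sqrt_le_one_add_half (t : ℝ) (ht : 0 ≤ t) :
    Real.sqrt (1 + t) ≤ 1 + t / 2 := by
  rw [show (1 : ℝ) + t / 2 = Real.sqrt ((1 + t / 2) ^ 2) from
    (Real.sqrt_sq (by linarith)).symm]
  apply Real.sqrt_le_sqrt
  nlinarith

/-- Core inequality: `(1-t)/2 * ln(1-t) + (1+t)/2 * ln(1+t) ≥ t²/14` on `[0,1]`. -/
private lemma core_ineq (t : ℝ) (ht0 : 0 ≤ t) (ht1 : t ≤ 1) :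
    t ^ 2 / 14 ≤ (1 - t) / 2 * Real.log (1 - t) + (1 + t) / 2 * Real.log (1 + t) := by
  have h1 : -(t / 2) ≤ (1 - t) / 2 * Real.log (1 - t) := by
    rcases eq_or_lt_of_le ht1 with h | h
    · rw [h]; norm_num
    · have hpos : 0 < 1 - t := by linarith
      have hlog : -(t / (1 - t)) ≤ Real.log (1 - t) := by
        have h' := Real.one_sub_inv_le_log_of_pos hpos
        have he : 1 - (1 - t)⁻¹ = -(t / (1 - t)) := by field_simp; ring
        linarith [he ▸ h']
      calc -(t / 2) = (1 - t) / 2 * (-(t / (1 - t))) := by field_simp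
        _ ≤ (1 - t) / 2 * Real.log (1 - t) :=
            mul_le_mul_of_nonneg_left hlog (by linarith)
  have h2 : 2 * t / (2 + 3 * t / 2) ≤ Real.log (1 + t) := by
    set s := Real.sqrt (1 + t) with hs_def
    have hs : 0 < s := Real.sqrt_pos.2 (by linarith)
    have hsq : s ^ 2 = 1 + t := Real.sq_sqrt (by linarith)
    have hub : s ≤ 1 + t / 2 := sqrt_le_one_add_half t ht0
    have hlb : 1 - s⁻¹ ≤ Real.log s := Real.one_sub_inv_le_log_of_pos hs
    have hlogsq : Real.log (1 + t) = 2 * Real.log s := by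
      rw [← hsq, Real.log_pow]
      norm_num
    have heq : 1 - s⁻¹ = t / (1 + t + s) := by
      rw [eq_div_iff (by positivity)]
      field_simp
      nlinarith [hsq]
    have hmono : t / (2 + 3 * t / 2) ≤ t / (1 + t + s) :=
      div_le_div_of_nonneg_left ht0 (by positivity) (by linarith)
    rw [hlogsq]
    have hx : t / (2 + 3 * t / 2) ≤ Real.log s := by
      calc t / (2 + 3 * t / 2) ≤ t / (1 + t + s) := hmono
        _ = 1 - s⁻¹ := heq.symm
        _ ≤ Real.log s := hlb
    calc 2 * t / (2 + 3 * t / 2) = 2 * (t / (2 + 3 * t / 2)) := by ring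
      _ ≤ 2 * Real.log s := by linarith
  have h2' : t * (1 + t) / (2 + 3 * t / 2) ≤ (1 + t) / 2 * Real.log (1 + t) := by
    calc t * (1 + t) / (2 + 3 * t / 2) = (1 + t) / 2 * (2 * t / (2 + 3 * t / 2)) := by
          field_simp
      _ ≤ (1 + t) / 2 * Real.log (1 + t) :=
          mul_le_mul_of_nonneg_left h2 (by linarith)
  have hd : (0:ℝ) < 2 + 3 * t / 2 := by linarith
  have hfinal : t ^ 2 / 14 ≤ t * (1 + t) / (2 + 3 * t / 2) - t / 2 := by
    have he : t * (1 + t) / (2 + 3 * t / 2) - t / 2 = (t ^ 2 / 4) / (2 + 3 * t / 2) := by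
      field_simp
      ring
    rw [he, div_le_div_iff₀ (by norm_num) hd]
    nlinarith
  linarith

private lemma log2_pos : (0:ℝ) < Real.log 2 := Real.log_pos (by norm_num)

private lemma binEnt_half_le (p : ℝ) (h0 : 0 ≤ p) (h2 : p ≤ 1/2) :
    binEnt p ≤ 1 - (1 + Real.log (p^2 + (1-p)^2) / Real.log 2) / 160 := by
  set t := 1 - 2 * p with ht_def
  have ht0 : 0 ≤ t := by rw [ht_def]; linarith
  have ht1 : t ≤ 1 := by rw [ht_def]; linarith
  have hid1 : p * Real.log p = p * Real.log (1 - t) - p * Real.log 2 := by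
    rcases eq_or_lt_of_le h0 with h | h
    · simp [← h]
    · have h1t : 1 - t = 2 * p := by rw [ht_def]; ring
      rw [h1t, Real.log_mul (by norm_num) (ne_of_gt h)]
      ring
  have hid2 : (1 - p) * Real.log (1 - p) =
      (1 - p) * Real.log (1 + t) - (1 - p) * Real.log 2 := by
    have h1t : 1 + t = 2 * (1 - p) := by rw [ht_def]; ring
    rw [h1t, Real.log_mul (by norm_num) (by linarith)]
    ring
  have hcore := core_ineq t ht0 ht1
  have hpt : (1 - t) / 2 = p := by rw [ht_def]; ring
  have hpt2 : (1 + t) / 2 = 1 - p := by rw [ht_def]; ring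
  rw [hpt, hpt2] at hcore
  have hnum : t ^ 2 / 14 ≤ Real.log 2 + p * Real.log p + (1 - p) * Real.log (1 - p) := by
    have hsplit : p + (1 - p) = 1 := by ring
    nlinarith [hcore, hid1, hid2]
  have hben : 1 - binEnt p =
      (Real.log 2 + p * Real.log p + (1 - p) * Real.log (1 - p)) / Real.log 2 := by
    unfold binEnt Real.logb
    field_simp
    ring
  have hlow : t ^ 2 / 14 / Real.log 2 ≤ 1 - binEnt p := by
    rw [hben]
    exact (div_le_div_iff_of_pos_right log2_pos).mpr hnum
  have hcoll : p ^ 2 + (1 - p) ^ 2 = (1 + t ^ 2) / 2 := by rw [ht_def]; ring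
  have hlogcoll : Real.log (p ^ 2 + (1 - p) ^ 2) = Real.log (1 + t ^ 2) - Real.log 2 := by
    rw [hcoll, Real.log_div (by positivity) (by norm_num)]
  have hup : Real.log (1 + t ^ 2) ≤ t ^ 2 := by
    have := Real.log_le_sub_one_of_pos (show (0:ℝ) < 1 + t ^ 2 by positivity)
    linarith
  have hterm : (1 + Real.log (p ^ 2 + (1 - p) ^ 2) / Real.log 2) / 160 ≤
      t ^ 2 / Real.log 2 / 160 := by
    rw [hlogcoll]
    have he : 1 + (Real.log (1 + t ^ 2) - Real.log 2) / Real.log 2 =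
        Real.log (1 + t ^ 2) / Real.log 2 := by field_simp; ring
    rw [he]
    apply (div_le_div_iff_of_pos_right (by norm_num : (0:ℝ) < 160)).mpr
    exact (div_le_div_iff_of_pos_right log2_pos).mpr hup
  have hcmp : t ^ 2 / Real.log 2 / 160 ≤ t ^ 2 / 14 / Real.log 2 := by
    rw [div_div, div_div]
    exact div_le_div_of_nonneg_left (by positivity) (by positivity) (by nlinarith [log2_pos])
  linarith

private lemma binEnt_symm (p : ℝ) : binEnt (1 - p) = binEnt p := by
  unfold binEnt
  rw [show (1:ℝ) - (1 - p) = p by ring]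
  ring

private lemma binEnt_le (p : ℝ) (h0 : 0 ≤ p) (h1 : p ≤ 1) :
    binEnt p ≤ 1 - (1 + Real.log (p^2 + (1-p)^2) / Real.log 2) / 160 := by
  rcases le_or_gt p (1/2) with h | h
  · exact binEnt_half_le p h0 h
  · have hx := binEnt_half_le (1 - p) (by linarith) (by linarith)
    rw [binEnt_symm] at hx
    rw [show (1:ℝ) - (1 - p) = p by ring] at hx
    calc binEnt p ≤ 1 - (1 + Real.log ((1-p)^2 + p^2) / Real.log 2) / 160 := hx
      _ = 1 - (1 + Real.log (p^2 + (1-p)^2) / Real.log 2) / 160 := by ring_nf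

/-- **Entropy bound from list concentration for product distributions**: if a list
`L ⊆ {0,1}ⁿ` of size exactly `2^{n−ℓ}` has mass at least `2^{−εℓ}` under the product
Bernoulli distribution with parameters `p₁,…,pₙ`, then `Σᵢ h(pᵢ) ≤ n − (1−ε)²ℓ/320`. -/
theorem entropy_bound_from_list_concentration
    (n ℓ : ℕ) (hℓ1 : 1 ≤ ℓ) (hℓn : ℓ ≤ n)
    (ε : ℝ) (hε : ε ∈ Set.Icc (0 : ℝ) (1 / 4))
    (p : Fin n → ℝ) (hp : ∀ i, p i ∈ Set.Icc (0 : ℝ) 1)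
    (L : Finset (Fin n → Bool)) (hcard : L.card = 2 ^ (n - ℓ))
    (hmass : (2 : ℝ) ^ (-(ε * (ℓ : ℝ))) ≤
      ∑ x ∈ L, ∏ i, (if x i then p i else 1 - p i)) :
    ∑ i, binEnt (p i) ≤ (n : ℝ) - (1 - ε) ^ 2 * (ℓ : ℝ) / 320 := by
  obtain ⟨hε0, hε1⟩ := hε
  set w : (Fin n → Bool) → ℝ := fun x => ∏ i, (if x i then p i else 1 - p i) with hw_def
  set c : Fin n → ℝ := fun i => (p i)^2 + (1 - p i)^2 with hc_def
  have hc_half : ∀ i, (1:ℝ)/2 ≤ c i := by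
    intro i
    obtain ⟨h0, h1⟩ := hp i
    simp only [hc_def]
    nlinarith [sq_nonneg (2 * p i - 1)]
  have hc_pos : ∀ i, (0:ℝ) < c i := fun i => lt_of_lt_of_le (by norm_num) (hc_half i)
  have hCS : (∑ x ∈ L, w x) ^ 2 ≤ (L.card : ℝ) * ∑ x ∈ L, (w x) ^ 2 :=
    sq_sum_le_card_mul_sum_sq
  have hsub : ∑ x ∈ L, (w x) ^ 2 ≤ ∑ x : Fin n → Bool, (w x) ^ 2 :=
    Finset.sum_le_sum_of_subset_of_nonneg (Finset.subset_univ L)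
      (fun x _ _ => sq_nonneg _)
  have hprod : ∑ x : Fin n → Bool, (w x) ^ 2 = ∏ i, c i := by
    have hsq : ∀ x : Fin n → Bool, (w x) ^ 2 =
        ∏ i, (if x i then (p i)^2 else (1 - p i)^2) := by
      intro x
      simp only [hw_def]
      rw [← Finset.prod_pow]
      apply Finset.prod_congr rfl
      intro i _
      split <;> rfl
    simp_rw [hsq]
    rw [← Fintype.prod_sum (f := fun i (b : Bool) => if b then (p i)^2 else (1 - p i)^2)]
    apply Finset.prod_congr rfl
    intro i _
    simp [hc_def, add_comm]
  have hpow_pos : (0:ℝ) < (2 : ℝ) ^ (-(ε * (ℓ : ℝ))) := Real.rpow_pos_of_pos (by norm_num) _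
  have hchain : ((2 : ℝ) ^ (-(ε * (ℓ : ℝ)))) ^ 2 ≤ (L.card : ℝ) * ∏ i, c i := by
    calc ((2 : ℝ) ^ (-(ε * (ℓ : ℝ)))) ^ 2 ≤ (∑ x ∈ L, w x) ^ 2 :=
          pow_le_pow_left₀ hpow_pos.le hmass 2
      _ ≤ (L.card : ℝ) * ∑ x ∈ L, (w x) ^ 2 := hCS
      _ ≤ (L.card : ℝ) * ∑ x : Fin n → Bool, (w x) ^ 2 :=
          mul_le_mul_of_nonneg_left hsub (Nat.cast_nonneg _)
      _ = (L.card : ℝ) * ∏ i, c i := by rw [hprod]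
  have hprod_pos : (0:ℝ) < ∏ i, c i := Finset.prod_pos (fun i _ => hc_pos i)
  have hcard_pos : (0:ℝ) < (L.card : ℝ) := by
    rw [hcard]; positivity
  have hlog : -(2 * ε * ℓ) * Real.log 2 ≤
      ((n:ℝ) - ℓ) * Real.log 2 + ∑ i, Real.log (c i) := by
    have h := Real.log_le_log (by positivity) hchain
    rw [Real.log_pow, Real.log_rpow (by norm_num), Real.log_mul (ne_of_gt hcard_pos)
      (ne_of_gt hprod_pos), Real.log_prod (fun i _ => ne_of_gt (hc_pos i))] at h
    have hlogcard : Real.log (L.card : ℝ) = ((n:ℝ) - ℓ) * Real.log 2 := by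
      rw [hcard]
      push_cast
      rw [Real.log_pow, Nat.cast_sub hℓn]
    rw [hlogcard] at h
    calc -(2 * ε * ℓ) * Real.log 2 = (2:ℕ) * (-(ε * ℓ) * Real.log 2) := by push_cast; ring
      _ ≤ ((n:ℝ) - ℓ) * Real.log 2 + ∑ i, Real.log (c i) := h
  have hD : ((1:ℝ) - 2 * ε) * ℓ ≤ ∑ i, (1 + Real.log (c i) / Real.log 2) := by
    have hsum : ∑ i, (1 + Real.log (c i) / Real.log 2) =
        (n:ℝ) + (∑ i, Real.log (c i)) / Real.log 2 := by
      rw [Finset.sum_add_distrib, Finset.sum_const, Finset.card_univ, Fintype.card_fin,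
        ← Finset.sum_div]
      simp
    rw [hsum]
    have h2 : -(2 * ε * ℓ) ≤ ((n:ℝ) - ℓ) + (∑ i, Real.log (c i)) / Real.log 2 := by
      have h := (div_le_div_iff_of_pos_right log2_pos).mpr hlog
      rwa [mul_div_assoc, div_self (ne_of_gt log2_pos), mul_one, add_div, mul_div_assoc,
        div_self (ne_of_gt log2_pos), mul_one] at h
    linarith
  have hbound : ∑ i, binEnt (p i) ≤
      (n:ℝ) - (∑ i, (1 + Real.log (c i) / Real.log 2)) / 160 := by
    calc ∑ i, binEnt (p i) ≤ ∑ i, (1 - (1 + Real.log (c i) / Real.log 2) / 160) :=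
          Finset.sum_le_sum (fun i _ => binEnt_le (p i) (hp i).1 (hp i).2)
      _ = (n:ℝ) - (∑ i, (1 + Real.log (c i) / Real.log 2)) / 160 := by
          rw [Finset.sum_sub_distrib, Finset.sum_const, Finset.card_univ, Fintype.card_fin,
            ← Finset.sum_div]
          simp
  have hfinal : (1 - ε) ^ 2 * (ℓ:ℝ) / 320 ≤ ((1:ℝ) - 2 * ε) * ℓ / 160 := by
    have hℓ0 : (0:ℝ) ≤ ℓ := Nat.cast_nonneg _
    have hsq : ε * ε ≤ ε * (1/4) := mul_le_mul_of_nonneg_left hε1 hε0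
    have hcoef : (0:ℝ) ≤ 1 - 2 * ε - ε ^ 2 := by nlinarith
    nlinarith [mul_nonneg hℓ0 hcoef]
  have h5 : ((1:ℝ) - 2 * ε) * ℓ / 160 ≤ (∑ i, (1 + Real.log (c i) / Real.log 2)) / 160 :=
    (div_le_div_iff_of_pos_right (by norm_num : (0:ℝ) < 160)).mpr hD
  linarith
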